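/- For every real number t > 0, the number 8t belongs to E(t), and every element e of E(t) with e ∉ {γ₁(t), γ₂(t), γ₃(t)} satisfies e ≥ 8t. -/
import Mathlib


/-- `γ_n(t) = t·n·(2 + n·t⁻³)` -/
noncomputable def gammaF (t : ℝ) (n : ℕ) : ℝ := t * n * (2 + n * (t ^ 3)⁻¹)

/-- `α_k(t) = t·(k(k+2) − 1 + t⁻³)` -/
noncomputable def alphaF (t : ℝ) (k : ℕ) : ℝ := t * (k * (k + 2) - 1 + (t ^ 3)⁻¹)

/-- `β_l(t) = t·l·(l+2)` -/
noncomputable def betaF (t : ℝ) (l : ℕ) : ℝ := t * l * (l + 2)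

/-- The set `E(t)` of nonzero eigenvalues of the unit-volume Berger sphere Laplacian. -/
def EV (t : ℝ) : Set ℝ :=
  {x | ∃ n : ℕ, 1 ≤ n ∧ x = gammaF t n} ∪
  {x | ∃ k : ℕ, Odd k ∧ 1 ≤ k ∧ x = alphaF t k} ∪
  {x | ∃ l : ℕ, Even l ∧ 2 ≤ l ∧ x = betaF t l}

theorem berger_lambda4 (t : ℝ) (ht : 0 < t) :
    8 * t ∈ EV t ∧
      ∀ e ∈ EV t, e ∉ ({gammaF t 1, gammaF t 2, gammaF t 3} : Set ℝ) → 8 * t ≤ e := by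
  have hinv : 0 < (t ^ 3)⁻¹ := by positivity
  constructor
  · right
    exact ⟨2, by norm_num, by simp [betaF]; ring⟩
  · rintro e ((⟨n, hn, rfl⟩ | ⟨k, hk, hk1, rfl⟩) | ⟨l, hl, hl2, rfl⟩) hne
    · simp only [Set.mem_insert_iff, Set.mem_singleton_iff, not_or] at hne
      have hn4 : 4 ≤ n := by
        by_contra h
        interval_cases n <;> simp_all
      have hn4' : (4 : ℝ) ≤ n := by exact_mod_cast hn4
      have : (8 : ℝ) ≤ n * (2 + n * (t ^ 3)⁻¹) := by
        have h1 : (2 : ℝ) ≤ 2 + n * (t ^ 3)⁻¹ := by nlinarith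
        nlinarith
      unfold gammaF
      nlinarith
    · simp only [Set.mem_insert_iff, Set.mem_singleton_iff, not_or] at hne
      rcases eq_or_lt_of_le hk1 with h1 | h3
      · exfalso
        apply hne.1
        unfold alphaF gammaF
        rw [← h1]
        push_cast
        ring
      · obtain ⟨m, rfl⟩ := hk
        have hk3 : 3 ≤ 2 * m + 1 := by omega
        have hk3' : (3 : ℝ) ≤ ((2 * m + 1 : ℕ) : ℝ) := by exact_mod_cast hk3
        unfold alphaF
        have key : (8 : ℝ) ≤ ((2 * m + 1 : ℕ) : ℝ) * (((2 * m + 1 : ℕ) : ℝ) + 2) - 1 + (t ^ 3)⁻¹ := by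
          nlinarith
        calc 8 * t = t * 8 := by ring
          _ ≤ _ := mul_le_mul_of_nonneg_left key ht.le
    · have hl2' : (2 : ℝ) ≤ l := by exact_mod_cast hl2
      unfold betaF
      have key : (8 : ℝ) ≤ (l : ℝ) * (l + 2) := by nlinarith
      calc 8 * t = t * 8 := by ring
        _ ≤ t * ((l : ℝ) * (l + 2)) := mul_le_mul_of_nonneg_left key ht.le
        _ = _ := by ring
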